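/- There exists a Borel probability measure μ on ℝ (absolutely continuous with respect to Lebesgue measure) such that −1, 1 ∈ supp(μ), liminf_{ε→0} μ(B(−1,ε))/μ(B(1,ε)) = 0, and limsup_{ε→0} μ(B(−1,ε))/μ(B(1,ε)) = ∞. -/

import Mathlib

open MeasureTheory Metric Filter Set Topology ENNReal

noncomputable section

/-- The topological support of a Borel measure on a metric space: the set of points all of
whose open balls have positive measure. -/
def measureSupport {X : Type*} [PseudoMetricSpace X] [MeasurableSpace X]
    (μ : Measure X) : Set X :=
  {x | ∀ r > 0, 0 < μ (Metric.ball x r)}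

/-- `I` is an Onsager--Machlup functional for `μ` on `E`: for all `x₁ x₂ ∈ E`, the ratio of
small-ball probabilities tends to `exp (I x₂ - I x₁)` as the radius tends to `0⁺`. -/
def IsOMFunctional {X : Type*} [PseudoMetricSpace X] [MeasurableSpace X]
    (μ : Measure X) (E : Set X) (I : X → ℝ) : Prop :=
  ∀ x₁ ∈ E, ∀ x₂ ∈ E,
    Filter.Tendsto (fun r : ℝ => μ (Metric.ball x₁ r) / μ (Metric.ball x₂ r))
      (𝓝[>] 0) (𝓝 (ENNReal.ofReal (Real.exp (I x₂ - I x₁))))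

/-- Property `M(μ, E)`: there is `x⋆ ∈ E` such that for every `x ∉ E` the small-ball
probability ratio `μ(B(x,r)) / μ(B(x⋆,r))` tends to `0` as `r → 0⁺`. -/
def PropertyM {X : Type*} [PseudoMetricSpace X] [MeasurableSpace X]
    (μ : Measure X) (E : Set X) : Prop :=
  ∃ xs ∈ E, ∀ x ∉ E,
    Filter.Tendsto (fun r : ℝ => μ (Metric.ball x r) / μ (Metric.ball xs r)) (𝓝[>] 0) (𝓝 0)
namespace OMAux

lemma two_mul_inv_cancel : (2:ℝ≥0∞) * 2⁻¹ = 1 :=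
  ENNReal.mul_inv_cancel (by norm_num) (by norm_num)

lemma pow_mul_halfpow (a b : ℕ) (h : a ≤ b) :
    (2:ℝ≥0∞)^a * (2⁻¹)^b = (2⁻¹:ℝ≥0∞)^(b - a) := by
  have : (2⁻¹:ℝ≥0∞)^b = (2⁻¹:ℝ≥0∞)^a * (2⁻¹)^(b-a) := by rw [← pow_add]; congr 1; omega
  rw [this, ← mul_assoc, ← mul_pow, two_mul_inv_cancel, one_pow, one_mul]


lemma halfpow_ne_zero (n : ℕ) : (2⁻¹:ℝ≥0∞)^n ≠ 0 := by
  apply pow_ne_zero; simp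

lemma halfpow_ne_top (n : ℕ) : (2⁻¹:ℝ≥0∞)^n ≠ ⊤ := by
  apply pow_ne_top; simp

lemma halfpow_pos (n : ℕ) : (0:ℝ≥0∞) < (2⁻¹:ℝ≥0∞)^n :=
  pos_iff_ne_zero.mpr (halfpow_ne_zero n)

lemma halfpow_div' (a b : ℕ) (h : b ≤ a) :
    (2⁻¹:ℝ≥0∞)^b / (2⁻¹)^a = (2:ℝ≥0∞)^(a - b) := by
  rw [show (2⁻¹:ℝ≥0∞)^a = (2⁻¹:ℝ≥0∞)^b * (2⁻¹)^(a-b) by rw [← pow_add]; congr 1; omega]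
  rw [show (2⁻¹:ℝ≥0∞)^b = (2⁻¹:ℝ≥0∞)^b * 1 by rw [mul_one]]
  rw [mul_assoc, ENNReal.mul_div_mul_left _ _ (halfpow_ne_zero b) (halfpow_ne_top b)]
  rw [one_mul, one_div, ← ENNReal.inv_pow, inv_inv]

lemma halfpow_div (a b : ℕ) (h : b ≤ a) :
    (2⁻¹:ℝ≥0∞)^a / (2⁻¹)^b = (2⁻¹:ℝ≥0∞)^(a - b) := by
  rw [show (2⁻¹:ℝ≥0∞)^a = (2⁻¹:ℝ≥0∞)^(a-b) * (2⁻¹)^b by rw [← pow_add]; congr 1; omega]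
  rw [mul_comm, show (2⁻¹:ℝ≥0∞)^b = (2⁻¹:ℝ≥0∞)^b * 1 from (mul_one _).symm, mul_assoc,
    ENNReal.mul_div_mul_left _ _ (halfpow_ne_zero b) (halfpow_ne_top b), one_mul, div_one]

lemma ofReal_halfpow (n : ℕ) : ENNReal.ofReal ((1/2:ℝ)^n) = (2⁻¹:ℝ≥0∞)^n := by
  rw [ENNReal.ofReal_pow (by norm_num)]
  congr 1
  rw [show (1/2:ℝ) = 2⁻¹ by norm_num, ENNReal.ofReal_inv_of_pos (by norm_num)]
  norm_num

/-- the `k`-th annulus near `-1`. -/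
def myJ (k : ℕ) : Set ℝ := Set.Ioo (-1 + (1/2:ℝ)^((k+1)^2+1)) (-1 + (1/2:ℝ)^((k+1)^2))

/-- mass packet measures -/
def myf (k : ℕ) : Measure ℝ := ((2:ℝ≥0∞)^(k+2)) • volume.restrict (myJ k)

/-- the total (unnormalised) measure -/
def myν : Measure ℝ :=
  Measure.sum myf + (2:ℝ≥0∞)⁻¹ • volume.restrict (Set.Ioo (1/2:ℝ) (3/2))

lemma myf_apply {k : ℕ} {s : Set ℝ} (hs : MeasurableSet s) :
    myf k s = (2:ℝ≥0∞)^(k+2) * volume (s ∩ myJ k) := by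
  rw [myf, Measure.smul_apply, Measure.restrict_apply hs, smul_eq_mul]

lemma volume_myJ (k : ℕ) : volume (myJ k) = (2⁻¹:ℝ≥0∞)^((k+1)^2+1) := by
  rw [myJ, Real.volume_Ioo,
    show (-1 + (1/2:ℝ)^((k+1)^2)) - (-1 + (1/2:ℝ)^((k+1)^2+1)) = (1/2:ℝ)^((k+1)^2+1) by ring,
    ofReal_halfpow]

lemma myf_univ (k : ℕ) : myf k Set.univ = (2⁻¹:ℝ≥0∞)^(k*(k+1)) := by
  rw [myf_apply MeasurableSet.univ, Set.univ_inter, volume_myJ,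
    pow_mul_halfpow _ _ (by nlinarith)]
  congr 1
  have h1 : (k+1)^2 = k*k + 2*k + 1 := by ring
  have h2 : k*(k+1) = k*k + k := by ring
  omega

lemma myν_apply {s : Set ℝ} (hs : MeasurableSet s) :
    myν s = (∑' k, (2:ℝ≥0∞)^(k+2) * volume (s ∩ myJ k))
      + 2⁻¹ * volume (s ∩ Set.Ioo (1/2:ℝ) (3/2)) := by
  rw [myν, Measure.add_apply, Measure.sum_apply _ hs, Measure.smul_apply,
    Measure.restrict_apply hs, smul_eq_mul]
  congr 1
  exact tsum_congr fun k => myf_apply hs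

lemma myν_ball_one {ε : ℝ} (h0 : 0 < ε) (h : ε ≤ 1/2) :
    myν (Metric.ball (1:ℝ) ε) = ENNReal.ofReal ε := by
  rw [myν_apply measurableSet_ball]
  have hJ : ∀ k : ℕ, Metric.ball (1:ℝ) ε ∩ myJ k = ∅ := by
    intro k
    rw [Real.ball_eq_Ioo, myJ, Set.eq_empty_iff_forall_notMem]
    rintro x ⟨⟨hx1, -⟩, -, hx4⟩
    have hle : (1/2:ℝ)^((k+1)^2) ≤ (1/2:ℝ)^1 :=
      pow_le_pow_of_le_one (by norm_num) (by norm_num) (Nat.one_le_pow _ _ (by omega))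
    simp only [pow_one] at hle
    linarith
  have hI : Metric.ball (1:ℝ) ε ∩ Set.Ioo (1/2:ℝ) (3/2) = Metric.ball (1:ℝ) ε := by
    apply Set.inter_eq_self_of_subset_left
    rw [Real.ball_eq_Ioo]
    exact Set.Ioo_subset_Ioo (by linarith) (by linarith)
  simp only [hJ, hI, measure_empty, mul_zero, tsum_zero, zero_add]
  rw [Real.volume_ball, show (2:ℝ)*ε = ε*2 by ring, ENNReal.ofReal_mul h0.le,
    ← mul_assoc, mul_comm, ← mul_assoc]
  norm_num
  rw [two_mul_inv_cancel, one_mul]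


lemma myν_univ_le : myν Set.univ ≤ 2 + 2⁻¹ := by
  rw [myν_apply MeasurableSet.univ]
  have h1 : ∀ k : ℕ, (2:ℝ≥0∞)^(k+2) * volume (Set.univ ∩ myJ k) ≤ (2⁻¹:ℝ≥0∞)^k := by
    intro k
    have := myf_univ k
    rw [myf_apply MeasurableSet.univ] at this
    rw [this]
    exact pow_le_pow_of_le_one zero_le (by norm_num) (by nlinarith)
  calc (∑' k, (2:ℝ≥0∞)^(k+2) * volume (Set.univ ∩ myJ k))
        + 2⁻¹ * volume (Set.univ ∩ Set.Ioo (1/2:ℝ) (3/2))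
      ≤ (∑' k : ℕ, (2⁻¹:ℝ≥0∞)^k) + 2⁻¹ * 1 := by
        gcongr with k
        · exact h1 k
        · rw [Set.univ_inter, Real.volume_Ioo]
          norm_num
    _ = 2 + 2⁻¹ := by
        rw [ENNReal.tsum_geometric, mul_one]
        congr 1
        rw [show (1:ℝ≥0∞) - 2⁻¹ = 2⁻¹ by
          rw [ENNReal.sub_eq_of_eq_add (by norm_num)]; exact (ENNReal.inv_two_add_inv_two).symm]
        rw [inv_inv]

lemma myν_univ_ne_top : myν Set.univ ≠ ⊤ :=
  (lt_of_le_of_lt myν_univ_le (by norm_num)).ne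

lemma myν_univ_ne_zero : myν Set.univ ≠ 0 := by
  intro h
  have h2 : myν (Metric.ball (1:ℝ) (1/2)) = 0 :=
    le_antisymm (h ▸ measure_mono (Set.subset_univ _)) zero_le
  rw [myν_ball_one (by norm_num) (le_refl _)] at h2
  simp [ENNReal.ofReal_eq_zero] at h2

/-- lower bound at radius `(1/2)^((k+1)^2)` -/
lemma myν_ball_lower (k : ℕ) :
    (2⁻¹:ℝ≥0∞)^(k*(k+1)) ≤ myν (Metric.ball (-1:ℝ) ((1/2:ℝ)^((k+1)^2))) := by
  have hsub : myJ k ⊆ Metric.ball (-1:ℝ) ((1/2:ℝ)^((k+1)^2)) := by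
    rw [Real.ball_eq_Ioo, myJ]
    apply Set.Ioo_subset_Ioo
    · have : (0:ℝ) < (1/2:ℝ)^((k+1)^2+1) := by positivity
      have h2 : (0:ℝ) < (1/2:ℝ)^((k+1)^2) := by positivity
      linarith
    · linarith
  have hm : MeasurableSet (myJ k) := measurableSet_Ioo
  calc (2⁻¹:ℝ≥0∞)^(k*(k+1)) = myf k (myJ k) := by
        rw [← myf_univ k, myf_apply MeasurableSet.univ, myf_apply hm, Set.univ_inter,
          Set.inter_self]
    _ ≤ myf k (Metric.ball (-1:ℝ) ((1/2:ℝ)^((k+1)^2))) := measure_mono hsub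
    _ ≤ myν (Metric.ball (-1:ℝ) ((1/2:ℝ)^((k+1)^2))) := by
        rw [myν]
        exact le_trans (Measure.le_sum myf k _) (Measure.le_add_right (le_refl _) _)

/-- upper bound at radius `(1/2)^((k+1)^2+1)` -/
lemma myν_ball_upper (k : ℕ) :
    myν (Metric.ball (-1:ℝ) ((1/2:ℝ)^((k+1)^2+1))) ≤ 2 * (2⁻¹:ℝ≥0∞)^((k+1)*(k+2)) := by
  set δ : ℝ := (1/2:ℝ)^((k+1)^2+1) with hδ
  have hball : Metric.ball (-1:ℝ) δ = Set.Ioo (-1-δ) (-1+δ) := Real.ball_eq_Ioo _ _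
  rw [myν_apply measurableSet_ball]
  -- the part near 1 vanishes
  have hI : Metric.ball (-1:ℝ) δ ∩ Set.Ioo (1/2:ℝ) (3/2) = ∅ := by
    rw [hball, Set.eq_empty_iff_forall_notMem]
    rintro x ⟨⟨-, hx2⟩, hx3, -⟩
    have : δ ≤ 1 := pow_le_one₀ (by norm_num) (by norm_num)
    linarith
  -- packets with index ≤ k don't meet the ball
  have hzero : ∀ j : ℕ, j < k + 1 → (2:ℝ≥0∞)^(j+2) * volume (Metric.ball (-1:ℝ) δ ∩ myJ j) = 0 := by
    intro j hj
    have : Metric.ball (-1:ℝ) δ ∩ myJ j = ∅ := by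
      rw [hball, myJ, Set.eq_empty_iff_forall_notMem]
      rintro x ⟨⟨-, hx2⟩, hx3, -⟩
      have hle : δ ≤ (1/2:ℝ)^((j+1)^2+1) :=
        pow_le_pow_of_le_one (by norm_num) (by norm_num) (by nlinarith)
      linarith
    rw [this, measure_empty, mul_zero]
  -- tail bound
  have htail : (∑' j, (2:ℝ≥0∞)^(j+2) * volume (Metric.ball (-1:ℝ) δ ∩ myJ j))
      ≤ 2 * (2⁻¹:ℝ≥0∞)^((k+1)*(k+2)) := by
    rw [← Summable.sum_add_tsum_nat_add' (k := k+1) ENNReal.summable]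
    have hfin : (∑ j ∈ Finset.range (k+1),
        (2:ℝ≥0∞)^(j+2) * volume (Metric.ball (-1:ℝ) δ ∩ myJ j)) = 0 :=
      Finset.sum_eq_zero fun j hj => hzero j (Finset.mem_range.mp hj)
    rw [hfin, zero_add]
    calc (∑' i : ℕ, (2:ℝ≥0∞)^((i+(k+1))+2) * volume (Metric.ball (-1:ℝ) δ ∩ myJ (i+(k+1))))
        ≤ ∑' i : ℕ, (2⁻¹:ℝ≥0∞)^((k+1)*(k+2)) * (2⁻¹)^i := by
          apply ENNReal.tsum_le_tsum
          intro i
          calc (2:ℝ≥0∞)^((i+(k+1))+2) * volume (Metric.ball (-1:ℝ) δ ∩ myJ (i+(k+1)))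
              ≤ (2:ℝ≥0∞)^((i+(k+1))+2) * volume (myJ (i+(k+1))) := by
                gcongr
                exact Set.inter_subset_right
            _ = (2⁻¹:ℝ≥0∞)^((i+(k+1))*((i+(k+1))+1)) := by
                rw [volume_myJ]
                have h := myf_univ (i+(k+1))
                rw [myf_apply MeasurableSet.univ, Set.univ_inter, volume_myJ] at h
                exact h
            _ ≤ (2⁻¹:ℝ≥0∞)^((k+1)*(k+2)+i) :=
                pow_le_pow_of_le_one zero_le (by norm_num) (by nlinarith)
            _ = (2⁻¹:ℝ≥0∞)^((k+1)*(k+2)) * (2⁻¹)^i := pow_add _ _ _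
      _ = 2 * (2⁻¹:ℝ≥0∞)^((k+1)*(k+2)) := by
          rw [ENNReal.tsum_mul_left, ENNReal.tsum_geometric, mul_comm]
          congr 1
          rw [show (1:ℝ≥0∞) - 2⁻¹ = 2⁻¹ by
            rw [ENNReal.sub_eq_of_eq_add (by norm_num)]; exact (ENNReal.inv_two_add_inv_two).symm]
          rw [inv_inv]
  rw [hI, measure_empty, mul_zero, add_zero]
  exact htail


lemma half_lt_one : (2⁻¹:ℝ≥0∞) < 1 := by
  rw [ENNReal.inv_lt_one]; exact one_lt_two

lemma exp_le_sq (k : ℕ) : k ≤ (k+1)^2 := by nlinarith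

lemma e_le_half (k : ℕ) : (1/2:ℝ)^((k+1)^2) ≤ 1/2 := by
  calc (1/2:ℝ)^((k+1)^2) ≤ (1/2:ℝ)^1 :=
        pow_le_pow_of_le_one (by norm_num) (by norm_num) (Nat.one_le_pow _ _ (by omega))
    _ = 1/2 := pow_one _

lemma d_le_half (k : ℕ) : (1/2:ℝ)^((k+1)^2+1) ≤ 1/2 := by
  calc (1/2:ℝ)^((k+1)^2+1) ≤ (1/2:ℝ)^1 :=
        pow_le_pow_of_le_one (by norm_num) (by norm_num) (by omega)
    _ = 1/2 := pow_one _

/-- the ratio function for the unnormalised measure -/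
def myu (ε : ℝ) : ℝ≥0∞ := myν (Metric.ball (-1) ε) / myν (Metric.ball 1 ε)

/-- radii where the ratio is large -/
def eseq (k : ℕ) : ℝ := (1/2:ℝ)^((k+1)^2)

/-- radii where the ratio is small -/
def dseq (k : ℕ) : ℝ := (1/2:ℝ)^((k+1)^2+1)

lemma eseq_pos (k : ℕ) : 0 < eseq k := by rw [eseq]; positivity
lemma dseq_pos (k : ℕ) : 0 < dseq k := by rw [dseq]; positivity

lemma tendsto_eseq : Tendsto eseq atTop (𝓝[>] (0:ℝ)) := by
  refine tendsto_nhdsWithin_iff.2 ⟨?_, Eventually.of_forall fun k => Set.mem_Ioi.2 (eseq_pos k)⟩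
  have hhalf : Tendsto (fun n : ℕ => (1/2:ℝ)^n) atTop (𝓝 0) :=
    tendsto_pow_atTop_nhds_zero_of_lt_one (by norm_num) (by norm_num)
  have hexp1 : Tendsto (fun k : ℕ => (k+1)^2) atTop atTop :=
    tendsto_atTop_mono exp_le_sq tendsto_id
  exact hhalf.comp hexp1

lemma tendsto_dseq : Tendsto dseq atTop (𝓝[>] (0:ℝ)) := by
  refine tendsto_nhdsWithin_iff.2 ⟨?_, Eventually.of_forall fun k => Set.mem_Ioi.2 (dseq_pos k)⟩
  have hhalf : Tendsto (fun n : ℕ => (1/2:ℝ)^n) atTop (𝓝 0) :=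
    tendsto_pow_atTop_nhds_zero_of_lt_one (by norm_num) (by norm_num)
  have hexp2 : Tendsto (fun k : ℕ => (k+1)^2+1) atTop atTop :=
    tendsto_atTop_mono (fun k => le_trans (exp_le_sq k) (by omega)) tendsto_id
  exact hhalf.comp hexp2

lemma myu_eseq (k : ℕ) : (2:ℝ≥0∞)^(k+1) ≤ myu (eseq k) := by
  rw [myu, eseq]
  have hden : myν (Metric.ball (1:ℝ) ((1/2:ℝ)^((k+1)^2))) = (2⁻¹:ℝ≥0∞)^((k+1)^2) := by
    rw [myν_ball_one (by positivity) (e_le_half k), ofReal_halfpow]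
  rw [hden]
  have harith : k*(k+1) ≤ (k+1)^2 := by nlinarith
  have hdiv : (2⁻¹:ℝ≥0∞)^(k*(k+1)) / (2⁻¹)^((k+1)^2) = (2:ℝ≥0∞)^(k+1) := by
    rw [halfpow_div' _ _ harith]
    congr 1
    have h1 : (k+1)^2 = k*(k+1) + (k+1) := by ring
    omega
  calc (2:ℝ≥0∞)^(k+1) = (2⁻¹:ℝ≥0∞)^(k*(k+1)) / (2⁻¹)^((k+1)^2) := hdiv.symm
    _ ≤ myν (Metric.ball (-1:ℝ) ((1/2:ℝ)^((k+1)^2))) / (2⁻¹:ℝ≥0∞)^((k+1)^2) :=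
        ENNReal.div_le_div_right (myν_ball_lower k) _

lemma myu_dseq (k : ℕ) : myu (dseq k) ≤ 2 * (2⁻¹:ℝ≥0∞)^k := by
  rw [myu, dseq]
  have hden : myν (Metric.ball (1:ℝ) ((1/2:ℝ)^((k+1)^2+1))) = (2⁻¹:ℝ≥0∞)^((k+1)^2+1) := by
    rw [myν_ball_one (by positivity) (d_le_half k), ofReal_halfpow]
  rw [hden]
  have harith : (k+1)^2+1 ≤ (k+1)*(k+2) := by nlinarith
  have hdiv : (2⁻¹:ℝ≥0∞)^((k+1)*(k+2)) / (2⁻¹)^((k+1)^2+1) = (2⁻¹:ℝ≥0∞)^k := by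
    rw [halfpow_div _ _ harith]
    congr 1
    have h1 : (k+1)*(k+2) = ((k+1)^2+1) + k := by ring
    omega
  calc myν (Metric.ball (-1:ℝ) ((1/2:ℝ)^((k+1)^2+1))) / (2⁻¹:ℝ≥0∞)^((k+1)^2+1)
      ≤ (2 * (2⁻¹:ℝ≥0∞)^((k+1)*(k+2))) / (2⁻¹:ℝ≥0∞)^((k+1)^2+1) :=
        ENNReal.div_le_div_right (myν_ball_upper k) _
    _ = 2 * ((2⁻¹:ℝ≥0∞)^((k+1)*(k+2)) / (2⁻¹)^((k+1)^2+1)) := by rw [mul_div_assoc]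
    _ = 2 * (2⁻¹:ℝ≥0∞)^k := by rw [hdiv]

end OMAux

open OMAux

theorem exists_measure_liminf_zero_limsup_top :
    ∃ μ : Measure ℝ, IsProbabilityMeasure μ ∧ μ ≪ MeasureTheory.volume ∧
      (-1 : ℝ) ∈ measureSupport μ ∧ (1 : ℝ) ∈ measureSupport μ ∧
      Filter.liminf
        (fun ε : ℝ => μ (Metric.ball (-1) ε) / μ (Metric.ball 1 ε)) (𝓝[>] 0) = 0 ∧
      Filter.limsup
        (fun ε : ℝ => μ (Metric.ball (-1) ε) / μ (Metric.ball 1 ε)) (𝓝[>] 0) = ⊤ := by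
  have hc0 : (myν Set.univ)⁻¹ ≠ 0 := ENNReal.inv_ne_zero.2 myν_univ_ne_top
  have hctop : (myν Set.univ)⁻¹ ≠ ⊤ := ENNReal.inv_ne_top.2 myν_univ_ne_zero
  refine ⟨(myν Set.univ)⁻¹ • myν, ?_, ?_, ?_, ?_, ?_, ?_⟩
  case _ => -- probability measure
    constructor
    rw [Measure.smul_apply, smul_eq_mul,
      ENNReal.inv_mul_cancel myν_univ_ne_zero myν_univ_ne_top]
  case _ => -- absolute continuity
    apply Measure.AbsolutelyContinuous.mk
    intro s hs h0
    have h1 : ∀ t : Set ℝ, volume (s ∩ t) = 0 :=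
      fun t => measure_mono_null Set.inter_subset_left h0
    rw [Measure.smul_apply, smul_eq_mul, myν_apply hs]
    simp [h1]
  case _ => -- -1 in support
    intro r hr
    obtain ⟨n, hn⟩ := exists_pow_lt_of_lt_one hr (by norm_num : (1/2:ℝ) < 1)
    have hsub : Metric.ball (-1:ℝ) ((1/2:ℝ)^((n+1)^2)) ⊆ Metric.ball (-1:ℝ) r := by
      apply Metric.ball_subset_ball
      calc (1/2:ℝ)^((n+1)^2) ≤ (1/2:ℝ)^n :=
            pow_le_pow_of_le_one (by norm_num) (by norm_num) (exp_le_sq n)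
        _ ≤ r := hn.le
    rw [Measure.smul_apply, smul_eq_mul]
    apply ENNReal.mul_pos hc0
    exact (lt_of_lt_of_le (lt_of_lt_of_le (halfpow_pos _) (myν_ball_lower n))
      (measure_mono hsub)).ne'
  case _ => -- 1 in support
    intro r hr
    have h1 : (0:ℝ) < min r (1/2) := lt_min hr (by norm_num)
    have hsub : Metric.ball (1:ℝ) (min r (1/2)) ⊆ Metric.ball (1:ℝ) r :=
      Metric.ball_subset_ball (min_le_left _ _)
    rw [Measure.smul_apply, smul_eq_mul]
    apply ENNReal.mul_pos hc0
    refine (lt_of_lt_of_le ?_ (measure_mono hsub)).ne'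
    rw [myν_ball_one h1 (min_le_right _ _)]
    exact ENNReal.ofReal_pos.2 h1
  case _ => -- liminf is zero
    have hratio : (fun ε : ℝ => ((myν Set.univ)⁻¹ • myν) (Metric.ball (-1) ε)
        / ((myν Set.univ)⁻¹ • myν) (Metric.ball 1 ε)) = myu := by
      funext ε
      rw [Measure.smul_apply, Measure.smul_apply, smul_eq_mul, smul_eq_mul, myu,
        ENNReal.mul_div_mul_left _ _ hc0 hctop]
    rw [hratio]
    have htend0 : Tendsto (myu ∘ dseq) atTop (𝓝 0) := by
      have hupper : Tendsto (fun k : ℕ => 2 * (2⁻¹:ℝ≥0∞)^k) atTop (𝓝 0) := by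
        have := ENNReal.Tendsto.const_mul (a := (2:ℝ≥0∞))
          (ENNReal.tendsto_pow_atTop_nhds_zero_of_lt_one half_lt_one) (Or.inr (by norm_num))
        simpa using this
      exact tendsto_of_tendsto_of_tendsto_of_le_of_le tendsto_const_nhds hupper
        (fun k => zero_le) (fun k => myu_dseq k)
    apply le_antisymm _ zero_le
    calc liminf myu (𝓝[>] (0:ℝ)) ≤ liminf myu (Filter.map dseq atTop) :=
          liminf_le_liminf_of_le tendsto_dseq
      _ = liminf (myu ∘ dseq) atTop := (liminf_comp myu dseq atTop).symm
      _ = 0 := htend0.liminf_eq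
  case _ => -- limsup is top
    have hratio : (fun ε : ℝ => ((myν Set.univ)⁻¹ • myν) (Metric.ball (-1) ε)
        / ((myν Set.univ)⁻¹ • myν) (Metric.ball 1 ε)) = myu := by
      funext ε
      rw [Measure.smul_apply, Measure.smul_apply, smul_eq_mul, smul_eq_mul, myu,
        ENNReal.mul_div_mul_left _ _ hc0 hctop]
    rw [hratio]
    have htop : Tendsto (myu ∘ eseq) atTop (𝓝 ⊤) := by
      rw [ENNReal.tendsto_nhds_top_iff_nat]
      intro n
      rw [eventually_atTop]
      refine ⟨n, fun k hk => ?_⟩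
      have hnat : n < 2^(k+1) :=
        lt_of_le_of_lt hk (lt_of_lt_of_le (Nat.lt_two_pow_self (n := k))
          (Nat.pow_le_pow_right (by norm_num) (Nat.le_succ k)))
      calc (n:ℝ≥0∞) < ((2^(k+1) : ℕ) : ℝ≥0∞) := by exact_mod_cast hnat
        _ = (2:ℝ≥0∞)^(k+1) := by push_cast; rfl
        _ ≤ (myu ∘ eseq) k := myu_eseq k
    apply le_antisymm le_top
    calc (⊤:ℝ≥0∞) = limsup (myu ∘ eseq) atTop := htop.limsup_eq.symm
      _ = limsup myu (Filter.map eseq atTop) := limsup_comp myu eseq atTop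
      _ ≤ limsup myu (𝓝[>] (0:ℝ)) := limsup_le_limsup_of_le tendsto_eseq
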